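/- Let (x_n) be the Tripell sequence x_0 = 0, x_1 = 1, x_2 = 2, x_n = 2x_{n-1} + x_{n-2} + x_{n-3}, and let γ be the real root of x³ - 2x² - x - 1 (γ ≈ 2.55). Then γ^{n-2} ≤ x_n ≤ γ^{n-1} for all n ≥ 1. -/

import Mathlib

def tripell : ℕ → ℤ
  | 0 => 0
  | 1 => 1
  | 2 => 2
  | n + 3 => 2 * tripell (n + 2) + tripell (n + 1) + tripell n

theorem stmt_18 (γ : ℝ) (hroot : γ ^ 3 - 2 * γ ^ 2 - γ - 1 = 0) (hγ : 1 < γ) :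
    ∀ n : ℕ, 1 ≤ n → γ ^ ((n : ℤ) - 2) ≤ (tripell n : ℝ) ∧ (tripell n : ℝ) ≤ γ ^ ((n : ℤ) - 1) := by
  have hγ0 : (0:ℝ) < γ := by linarith
  have hne : γ ≠ 0 := ne_of_gt hγ0
  have hγ2 : (2:ℝ) < γ := by nlinarith [sq_nonneg γ, sq_nonneg (γ-1)]
  have hγ3 : γ < 3 := by nlinarith [sq_nonneg γ, sq_nonneg (γ-3)]
  have hγsq : (5:ℝ) ≤ γ ^ 2 := by nlinarith [sq_nonneg γ, sq_nonneg (γ - 2)]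
  have hrec : ∀ m : ℤ, γ ^ (m + 3) = 2 * γ ^ (m + 2) + γ ^ (m + 1) + γ ^ m := by
    intro m
    have e3 : γ ^ (m + 3) = γ ^ m * γ ^ (3:ℕ) := by
      rw [← zpow_natCast γ 3, ← zpow_add₀ hne]; norm_num
    have e2 : γ ^ (m + 2) = γ ^ m * γ ^ (2:ℕ) := by
      rw [← zpow_natCast γ 2, ← zpow_add₀ hne]; norm_num
    have e1 : γ ^ (m + 1) = γ ^ m * γ ^ (1:ℕ) := by
      rw [← zpow_natCast γ 1, ← zpow_add₀ hne]; norm_num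
    rw [e3, e2, e1]
    have hcube : γ ^ (3:ℕ) = 2 * γ ^ (2:ℕ) + γ + 1 := by
      linarith
    rw [hcube]; ring
  set P : ℕ → Prop := fun n => γ ^ ((n : ℤ) - 2) ≤ (tripell n : ℝ) ∧ (tripell n : ℝ) ≤ γ ^ ((n : ℤ) - 1) with hP
  have key : ∀ n : ℕ, P (n+1) ∧ P (n+2) ∧ P (n+3) := by
    intro n
    induction n with
    | zero =>
      refine ⟨⟨?_, ?_⟩, ⟨?_, ?_⟩, ⟨?_, ?_⟩⟩ <;>
        simp only [tripell] <;> norm_num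
      · exact inv_le_one_of_one_le₀ hγ.le
      · linarith
      · linarith
      · exact hγsq
    | succ k ih =>
      obtain ⟨h1, h2, h3⟩ := ih
      refine ⟨h2, h3, ?_, ?_⟩
      · have e : (tripell (k+4) : ℝ) = 2 * (tripell (k+3) : ℝ) + (tripell (k+2) : ℝ) + (tripell (k+1) : ℝ) := by
          show ((tripell ((k+1)+3) : ℤ) : ℝ) = _
          rw [tripell]; push_cast; ring
        have hr := hrec ((k:ℤ) - 1)
        have a1 := h1.1; have a2 := h2.1; have a3 := h3.1
        rw [show ((k+1:ℕ):ℤ) - 2 = (k:ℤ) - 1 by push_cast; ring] at a1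
        rw [show ((k+2:ℕ):ℤ) - 2 = (k:ℤ) - 1 + 1 by push_cast; ring] at a2
        rw [show ((k+3:ℕ):ℤ) - 2 = (k:ℤ) - 1 + 2 by push_cast; ring] at a3
        rw [show ((k+1+3:ℕ):ℤ) - 2 = (k:ℤ) - 1 + 3 by push_cast; ring]
        rw [e, hr]; linarith
      · have e : (tripell (k+4) : ℝ) = 2 * (tripell (k+3) : ℝ) + (tripell (k+2) : ℝ) + (tripell (k+1) : ℝ) := by
          show ((tripell ((k+1)+3) : ℤ) : ℝ) = _
          rw [tripell]; push_cast; ring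
        have hr := hrec ((k:ℤ))
        have a1 := h1.2; have a2 := h2.2; have a3 := h3.2
        rw [show ((k+1:ℕ):ℤ) - 1 = (k:ℤ) by push_cast; ring] at a1
        rw [show ((k+2:ℕ):ℤ) - 1 = (k:ℤ) + 1 by push_cast; ring] at a2
        rw [show ((k+3:ℕ):ℤ) - 1 = (k:ℤ) + 2 by push_cast; ring] at a3
        rw [show ((k+1+3:ℕ):ℤ) - 1 = (k:ℤ) + 3 by push_cast; ring]
        rw [e, hr]; linarith
  intro n hn
  obtain ⟨m, rfl⟩ : ∃ m, n = m + 1 := ⟨n - 1, by omega⟩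
  exact (key m).1
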